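/- Let Δ be a finite ranked signature and yield a projective yield function over Δ with terminal alphabet {a,b,c,d}. For every r ∈ ℕ there exists s ∈ ℕ such that every term t over Δ whose yield lies in a^* b^s c^s d^* has a subtree t' such that, for some pair (x,y) ∈ {(a,c),(c,a),(b,d),(d,b)}, yield(t') contains at least r occurrences of x and no occurrence of y. -/

import Mathlib

/-- Terms over a ranked signature `Δ` with arity function `ar`. -/
inductive PTerm (Δ : Type*) (ar : Δ → ℕ) : Type _
  | node (f : Δ) (ts : Fin (ar f) → PTerm Δ ar) : PTerm Δ ar

variable {Δ : Type*} {ar : Δ → ℕ} {σ : Type*}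

/-- Yield of a term, given a yield function on symbols: `yield (f(t_1,…,t_k))` is
`Y f` with each variable `x_i` replaced by the yield of `t_i`. -/
def PTerm.yield (Y : ∀ f : Δ, List (σ ⊕ Fin (ar f))) : PTerm Δ ar → List σ
  | .node f ts => (Y f).flatMap fun s => match s with
      | .inl a => [a]
      | .inr i => (ts i).yield Y

/-- Projectivity: in `Y f`, each variable occurs exactly once, and the variables
occur in the order `x_1, …, x_k` from left to right. -/
def Projective (Y : ∀ f : Δ, List (σ ⊕ Fin (ar f))) : Prop :=
  ∀ f : Δ, (Y f).filterMap Sum.getRight? = List.ofFn (fun i : Fin (ar f) => i)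

/-- One-hole contexts over `Δ`: either the hole, or a node whose `i`-th child is
again a context (the others being terms; the value `ts i` is irrelevant). -/
inductive Ctx (Δ : Type*) (ar : Δ → ℕ) : Type _
  | hole : Ctx Δ ar
  | node (f : Δ) (i : Fin (ar f)) (C : Ctx Δ ar) (ts : Fin (ar f) → PTerm Δ ar) : Ctx Δ ar

/-- `C.subst t` plugs the term `t` into the hole of the context `C`. -/
def Ctx.subst : Ctx Δ ar → PTerm Δ ar → PTerm Δ ar
  | .hole, t => t
  | .node f i C ts, t => .node f fun j => if j = i then C.subst t else ts j

/-- Yield of a context, with `none` marking the hole. -/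
def Ctx.cyield (Y : ∀ f : Δ, List (σ ⊕ Fin (ar f))) : Ctx Δ ar → List (Option σ)
  | .hole => [none]
  | .node f i C ts => (Y f).flatMap fun s => match s with
      | .inl a => [some a]
      | .inr j => if j = i then C.cyield Y else ((ts j).yield Y).map some

/-- The part of the yield of a context to the left of the hole. -/
def Ctx.leftc (Y : ∀ f : Δ, List (σ ⊕ Fin (ar f))) (C : Ctx Δ ar) : List σ :=
  ((C.cyield Y).takeWhile fun o => o.isSome).reduceOption

/-- The part of the yield of a context to the right of the hole. -/
def Ctx.rightc (Y : ∀ f : Δ, List (σ ⊕ Fin (ar f))) (C : Ctx Δ ar) : List σ :=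
  (((C.cyield Y).dropWhile fun o => o.isSome).tail).reduceOption

/-- `yield(C) = leftc(C) · rightc(C)`. -/
def Ctx.yieldc (Y : ∀ f : Δ, List (σ ⊕ Fin (ar f))) (C : Ctx Δ ar) : List σ :=
  C.leftc Y ++ C.rightc Y

/-- Height of a term: 1 plus the maximum height of the children. -/
def PTerm.height : PTerm Δ ar → ℕ
  | .node _ ts => 1 + Finset.univ.sup fun i => (ts i).height

/-- Height of a context, viewed as a term (the hole is a nullary node). -/
def Ctx.height : Ctx Δ ar → ℕ
  | .hole => 1
  | .node _ i C ts =>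
      1 + max C.height (Finset.univ.sup fun j => if j = i then 0 else (ts j).height)

/-- `Subtree s t`: `s` is a subtree of `t` (a term rooted at a node of `t`). -/
inductive Subtree : PTerm Δ ar → PTerm Δ ar → Prop
  | refl (t : PTerm Δ ar) : Subtree t t
  | child {s : PTerm Δ ar} (f : Δ) (ts : Fin (ar f) → PTerm Δ ar) (i : Fin (ar f)) :
      Subtree s (ts i) → Subtree s (.node f ts)

/-- `StrictSubtree s t`: `s` is a subtree of a child of `t`. -/
def StrictSubtree (s t : PTerm Δ ar) : Prop :=
  ∃ (f : Δ) (ts : Fin (ar f) → PTerm Δ ar) (i : Fin (ar f)),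
    t = PTerm.node f ts ∧ Subtree s (ts i)

/-- `t.Pos p`: the list of child indices `p` is (the address of) a node of `t`. -/
inductive PTerm.Pos : PTerm Δ ar → List ℕ → Prop
  | nil (t : PTerm Δ ar) : Pos t []
  | cons (f : Δ) (ts : Fin (ar f) → PTerm Δ ar) (i : Fin (ar f)) {p : List ℕ} :
      Pos (ts i) p → Pos (.node f ts) (i.val :: p)

/-- The address of the hole of a context. -/
def Ctx.holePath : Ctx Δ ar → List ℕ
  | .hole => []
  | .node _ i C _ => i.val :: C.holePath

/-- Sum, over the nodes of a term, of a weight attached to the node labels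
(e.g. the number of `z`-labelled edges contributed by each node). -/
def PTerm.esum (w : Δ → ℕ) : PTerm Δ ar → ℕ
  | .node f ts => w f + Finset.univ.sum fun i => (ts i).esum w

/-- `(D_x, D_0, t_y)` is an `x,y,l`-separation of `t`. -/
def IsSep [DecidableEq σ] (Y : ∀ f : Δ, List (σ ⊕ Fin (ar f))) (x y : σ) (l : ℕ)
    (t : PTerm Δ ar) (Dx D0 : Ctx Δ ar) (ty : PTerm Δ ar) : Prop :=
  t = Dx.subst (D0.subst ty) ∧ (Dx.yieldc Y).count y = 0 ∧
    (D0.yieldc Y).count x ≤ l ∧ (ty.yield Y).count x = 0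

/-- `t` is `x,y,l`-separated. -/
def Separated [DecidableEq σ] (Y : ∀ f : Δ, List (σ ⊕ Fin (ar f))) (x y : σ) (l : ℕ)
    (t : PTerm Δ ar) : Prop :=
  ∃ Dx D0 ty, IsSep Y x y l t Dx D0 ty

/-- The four-letter alphabet `{a, b, c, d}`. -/
inductive ABCD | a | b | c | d
deriving DecidableEq


namespace Statement0Aux

open List

def ordA : ABCD → ℕ | .a => 0 | .b => 1 | .c => 2 | .d => 3

def W (na s nd : ℕ) : List ABCD :=
  List.replicate na ABCD.a ++ List.replicate s ABCD.b ++
    List.replicate s ABCD.c ++ List.replicate nd ABCD.d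

lemma pairwise_W (na s nd : ℕ) :
    (W na s nd).Pairwise (fun u v => ordA u ≤ ordA v) := by
  simp only [W, List.pairwise_append, List.pairwise_replicate, List.mem_replicate,
    List.mem_append]
  refine ⟨⟨⟨Or.inr le_rfl, Or.inr le_rfl, ?_⟩, Or.inr le_rfl, ?_⟩, Or.inr le_rfl, ?_⟩
  · rintro x ⟨-, rfl⟩ y ⟨-, rfl⟩; decide
  · rintro x (⟨-, rfl⟩ | ⟨-, rfl⟩) y ⟨-, rfl⟩ <;> decide
  · rintro x ((⟨-, rfl⟩ | ⟨-, rfl⟩) | ⟨-, rfl⟩) y ⟨-, rfl⟩ <;> decide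

lemma pair_sublist {α : Type*} {x y : α} {l1 l2 : List α} (hx : x ∈ l1) (hy : y ∈ l2) :
    [x, y] <+ l1 ++ l2 :=
  (List.singleton_sublist.mpr hx).append (List.singleton_sublist.mpr hy)

lemma ord_le_of_sublist {x y : ABCD} {na s nd : ℕ} (h : [x, y] <+ W na s nd) :
    ordA x ≤ ordA y := by
  have h2 := List.Pairwise.sublist h (pairwise_W na s nd)
  simpa using h2

lemma count_mid {na s nd : ℕ} {u : List ABCD} (hin : u <:+: W na s nd)
    {x y z : ABCD} (hx : x ∈ u) (hy : y ∈ u)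
    (hzx : ordA x < ordA z) (hzy : ordA z < ordA y) :
    u.count z = (W na s nd).count z := by
  obtain ⟨p, q, hw⟩ := hin
  have hzp : z ∉ p := by
    intro hz
    have h1 : [z, x] <+ p ++ u := pair_sublist hz hx
    have h2 : p ++ u <+ W na s nd := by
      rw [← hw]
      exact (List.sublist_append_left (p ++ u) q).trans (by rw [List.append_assoc])
    have := ord_le_of_sublist (h1.trans h2)
    omega
  have hzq : z ∉ q := by
    intro hz
    have h1 : [y, z] <+ u ++ q := pair_sublist hy hz
    have h2 : u ++ q <+ W na s nd := by
      rw [← hw, List.append_assoc]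
      exact List.sublist_append_right p (u ++ q)
    have := ord_le_of_sublist (h1.trans h2)
    omega
  have := congrArg (List.count z) hw
  simp only [List.count_append, List.count_eq_zero.mpr hzp, List.count_eq_zero.mpr hzq] at this
  omega

lemma count_W_b (na s nd : ℕ) : (W na s nd).count ABCD.b = s := by
  simp [W, List.count_append, List.count_replicate]

lemma count_W_c (na s nd : ℕ) : (W na s nd).count ABCD.c = s := by
  simp [W, List.count_append, List.count_replicate]

variable {Δ : Type*} {ar : Δ → ℕ} {σ : Type*}

lemma mem_Y (Y : ∀ f : Δ, List (σ ⊕ Fin (ar f))) (hY : Projective Y) (f : Δ)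
    (i : Fin (ar f)) : Sum.inr i ∈ Y f := by
  have h := hY f
  have hi : i ∈ (Y f).filterMap Sum.getRight? := by
    rw [h]
    exact List.mem_ofFn.mpr ⟨i, rfl⟩
  obtain ⟨x, hx, hx2⟩ := List.mem_filterMap.mp hi
  cases x with
  | inl a => simp at hx2
  | inr j => simp only [Sum.getRight?, Option.some.injEq] at hx2; rwa [hx2] at hx

lemma yield_node (Y : ∀ f : Δ, List (σ ⊕ Fin (ar f))) (f : Δ)
    (ts : Fin (ar f) → PTerm Δ ar) :
    (PTerm.node f ts).yield Y = (Y f).flatMap (fun s => match s with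
      | .inl a => [a]
      | .inr i => (ts i).yield Y) := by
  rw [PTerm.yield]

lemma yield_child_infix (Y : ∀ f : Δ, List (σ ⊕ Fin (ar f))) (hY : Projective Y) (f : Δ)
    (ts : Fin (ar f) → PTerm Δ ar) (i : Fin (ar f)) :
    ((ts i).yield Y) <:+: ((PTerm.node f ts).yield Y) := by
  obtain ⟨l1, l2, hl⟩ := List.append_of_mem (mem_Y Y hY f i)
  rw [yield_node, hl]
  refine ⟨l1.flatMap (fun s => match s with
      | .inl a => [a]
      | .inr j => (ts j).yield Y),
    l2.flatMap (fun s => match s with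
      | .inl a => [a]
      | .inr j => (ts j).yield Y), ?_⟩
  simp [List.flatMap_append, List.flatMap_cons]

lemma subtree_infix (Y : ∀ f : Δ, List (σ ⊕ Fin (ar f))) (hY : Projective Y)
    {t' t : PTerm Δ ar} (h : Subtree t' t) : (t'.yield Y) <:+: (t.yield Y) := by
  induction h with
  | refl => exact List.infix_rfl
  | child f ts i h ih => exact ih.trans (yield_child_infix Y hY f ts i)

lemma sum_split {α β : Type*} (h : α ⊕ β → ℕ) (l : List (α ⊕ β)) :
    (l.map h).sum = ((l.filterMap Sum.getLeft?).map (fun a => h (Sum.inl a))).sum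
      + ((l.filterMap Sum.getRight?).map (fun b => h (Sum.inr b))).sum := by
  induction l with
  | nil => simp
  | cons x l ih => cases x <;> simp [ih, List.filterMap_cons] <;> omega

lemma count_yield_node [DecidableEq σ] (Y : ∀ f : Δ, List (σ ⊕ Fin (ar f)))
    (hY : Projective Y) (f : Δ) (ts : Fin (ar f) → PTerm Δ ar) (z : σ) :
    ((PTerm.node f ts).yield Y).count z ≤ (Y f).length + ∑ i, ((ts i).yield Y).count z := by
  rw [yield_node, List.count_flatMap, sum_split]
  have h1 : (((Y f).filterMap Sum.getLeft?).map
      (fun a => (List.count z ∘ fun s => match s with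
        | .inl a => [a] | .inr i => (ts i).yield Y) (Sum.inl a))).sum ≤ (Y f).length := by
    have hb : ∀ x ∈ ((Y f).filterMap Sum.getLeft?).map
        (fun a => (List.count z ∘ fun s => match s with
          | .inl a => [a] | .inr i => (ts i).yield Y) (Sum.inl a)), x ≤ 1 := by
      intro x hx
      obtain ⟨a, -, rfl⟩ := List.mem_map.mp hx
      exact (List.count_le_length)
    calc _ ≤ _ := List.sum_le_card_nsmul _ 1 hb
    _ ≤ (Y f).length := by
        simp only [List.length_map, smul_eq_mul, mul_one]
        exact List.length_filterMap_le _ _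
  have h2 : (((Y f).filterMap Sum.getRight?).map
      (fun b => (List.count z ∘ fun s => match s with
        | .inl a => [a] | .inr i => (ts i).yield Y) (Sum.inr b))).sum
      = ∑ i, ((ts i).yield Y).count z := by
    rw [hY f, List.map_ofFn, List.sum_ofFn]
    rfl
  rw [h2]
  exact Nat.add_le_add h1 le_rfl

lemma mainA [Fintype Δ] (Y : ∀ f : Δ, List (ABCD ⊕ Fin (ar f))) (hY : Projective Y)
    (r na s nd : ℕ) (hr : 1 ≤ r) (hs1 : r ≤ s)
    (hs2 : (Finset.univ.sup fun f : Δ => (Y f).length) + (Finset.univ.sup ar) * (r - 1) < s) :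
    ∀ t : PTerm Δ ar, (t.yield Y) <:+: W na s nd → r ≤ (t.yield Y).count ABCD.b →
      ∃ t' : PTerm Δ ar, Subtree t' t ∧ ∃ x y : ABCD,
        (x, y) ∈ ([(ABCD.a, ABCD.c), (ABCD.c, ABCD.a),
                   (ABCD.b, ABCD.d), (ABCD.d, ABCD.b)] : List (ABCD × ABCD)) ∧
        r ≤ ((t'.yield Y).count x) ∧ ((t'.yield Y).count y) = 0 := by
  intro t
  induction t with
  | node f ts ih =>
    intro hin hb
    by_cases hd : ((PTerm.node f ts).yield Y).count ABCD.d = 0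
    · exact ⟨_, Subtree.refl _, ABCD.b, ABCD.d, by decide, hb, hd⟩
    have hdm : ABCD.d ∈ (PTerm.node f ts).yield Y :=
      List.count_pos_iff.mp (Nat.pos_of_ne_zero hd)
    have hbm : ABCD.b ∈ (PTerm.node f ts).yield Y :=
      List.count_pos_iff.mp (by omega)
    have hc : ((PTerm.node f ts).yield Y).count ABCD.c = s := by
      rw [count_mid hin hbm hdm (z := ABCD.c) (by decide) (by decide), count_W_c]
    by_cases ha : ((PTerm.node f ts).yield Y).count ABCD.a = 0
    · exact ⟨_, Subtree.refl _, ABCD.c, ABCD.a, by decide, by omega, ha⟩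
    have ham : ABCD.a ∈ (PTerm.node f ts).yield Y :=
      List.count_pos_iff.mp (Nat.pos_of_ne_zero ha)
    have hcm : ABCD.c ∈ (PTerm.node f ts).yield Y :=
      List.count_pos_iff.mp (by omega)
    have hbs : ((PTerm.node f ts).yield Y).count ABCD.b = s := by
      rw [count_mid hin ham hcm (z := ABCD.b) (by decide) (by decide), count_W_b]
    by_cases hex : ∃ i, r ≤ ((ts i).yield Y).count ABCD.b
    · obtain ⟨i, hi⟩ := hex
      have hinf : ((ts i).yield Y) <:+: W na s nd :=
        (yield_child_infix Y hY f ts i).trans hin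
      obtain ⟨t', ht', rest⟩ := ih i hinf hi
      exact ⟨t', Subtree.child f ts i ht', rest⟩
    · push_neg at hex
      have hbound := count_yield_node Y hY f ts ABCD.b
      have h1 : (Y f).length ≤ Finset.univ.sup fun f : Δ => (Y f).length :=
        Finset.le_sup (f := fun f : Δ => (Y f).length) (Finset.mem_univ f)
      have h2 : (∑ i, ((ts i).yield Y).count ABCD.b) ≤ (Finset.univ.sup ar) * (r - 1) := by
        calc (∑ i, ((ts i).yield Y).count ABCD.b) ≤ ∑ _i : Fin (ar f), (r - 1) :=
              Finset.sum_le_sum (fun i _ => by have := hex i; omega)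
        _ = ar f * (r - 1) := by
              simp [Finset.sum_const, Finset.card_univ]
        _ ≤ (Finset.univ.sup ar) * (r - 1) :=
              Nat.mul_le_mul_right _ (Finset.le_sup (Finset.mem_univ f))
      omega

end Statement0Aux

/-- For every `r` there is `s` such that every term whose yield lies in
`a^* b^s c^s d^*` has a subtree whose yield has at least `r` occurrences of `x` and
none of `y`, for some pair `(x,y) ∈ {(a,c),(c,a),(b,d),(d,b)}`. -/
theorem statement0 {Δ : Type*} [Fintype Δ] {ar : Δ → ℕ}
    (Y : ∀ f : Δ, List (ABCD ⊕ Fin (ar f))) (hY : Projective Y) (r : ℕ) :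
    ∃ s : ℕ, ∀ t : PTerm Δ ar,
      (∃ na nd : ℕ, t.yield Y =
          List.replicate na ABCD.a ++ List.replicate s ABCD.b ++
          List.replicate s ABCD.c ++ List.replicate nd ABCD.d) →
      ∃ t' : PTerm Δ ar, Subtree t' t ∧
        ∃ x y : ABCD,
          (x, y) ∈ ([(ABCD.a, ABCD.c), (ABCD.c, ABCD.a),
                     (ABCD.b, ABCD.d), (ABCD.d, ABCD.b)] : List (ABCD × ABCD)) ∧
          r ≤ (t'.yield Y).count x ∧ (t'.yield Y).count y = 0 := by
  classical
  set M := Finset.univ.sup fun f : Δ => (Y f).length with hM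
  set K := Finset.univ.sup ar with hK
  refine ⟨M + K * (r + 1) + (r + 1), ?_⟩
  rintro t ⟨na, nd, ht⟩
  have hin : t.yield Y <:+: Statement0Aux.W na (M + K * (r + 1) + (r + 1)) nd := by
    rw [ht]; exact List.infix_rfl
  have hb : r + 1 ≤ (t.yield Y).count ABCD.b := by
    have : (t.yield Y).count ABCD.b = M + K * (r + 1) + (r + 1) := by
      rw [ht]; exact Statement0Aux.count_W_b na _ nd
    omega
  have hs2 : M + K * (r + 1 - 1) < M + K * (r + 1) + (r + 1) := by
    have : K * (r + 1 - 1) ≤ K * (r + 1) := Nat.mul_le_mul_left _ (by omega)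
    omega
  obtain ⟨t', ht', x, y, hxy, hx, hy⟩ :=
    Statement0Aux.mainA Y hY (r + 1) na (M + K * (r + 1) + (r + 1)) nd (by omega)
      (by omega) hs2 t hin hb
  exact ⟨t', ht', x, y, hxy, by omega, hy⟩
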